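/- Let a_{n,k} denote the number of permutations π ∈ S_n that avoid both generalized patterns 1-23 and 21-3 and satisfy π_n = k. Then a_{n,k} = 0 whenever k ≥ ⌊n/2⌋ + 2; that is, no permutation of length n avoiding both 1-23 and 21-3 can end with an entry greater than or equal to ⌊n/2⌋ + 2. -/

import Mathlib

/-- `π` avoids the generalized pattern 1-23. -/
def Avoids1d23 {n : ℕ} (π : Equiv.Perm (Fin n)) : Prop :=
  ¬ ∃ (i j : Fin n) (h : j.1 + 1 < n), i < j ∧ π i < π j ∧ π j < π ⟨j.1 + 1, h⟩

/-- `π` avoids the generalized pattern 21-3. -/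
def Avoids21d3 {n : ℕ} (π : Equiv.Perm (Fin n)) : Prop :=
  ¬ ∃ (i j : Fin n) (h : i.1 + 1 < n), i.1 + 1 < j.1 ∧ π ⟨i.1 + 1, h⟩ < π i ∧ π i < π j

/-- `a n k` is the number of permutations of `S n` avoiding both `1-23` and `21-3`
whose last entry equals `k`. -/
noncomputable def a (n k : ℕ) : ℕ :=
  Nat.card {π : Equiv.Perm (Fin n) // Avoids1d23 π ∧ Avoids21d3 π ∧
    ∃ h : n - 1 < n, (π ⟨n - 1, h⟩).1 + 1 = k}

theorem a_vanishes (n k : ℕ) (hk : n / 2 + 2 ≤ k) :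
    a n k = 0 := by
  have hE : IsEmpty {π : Equiv.Perm (Fin n) // Avoids1d23 π ∧ Avoids21d3 π ∧
      ∃ h : n - 1 < n, (π ⟨n - 1, h⟩).1 + 1 = k} := by
    constructor
    rintro ⟨π, h1, h2, hlt, hπk⟩
    set L : Fin n := ⟨n - 1, hlt⟩ with hL
    -- small positions are not at the end
    have hsm : ∀ p : Fin n, π p < π L → p.1 < n - 1 := by
      intro p hp
      rcases lt_or_eq_of_le (Nat.le_sub_one_of_lt p.2) with h | h
      · exact h
      · exfalso
        have : p = L := Fin.ext h
        rw [this] at hp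
        exact lt_irrefl _ hp
    -- Lemma A: no descent at a small position
    have hA : ∀ (p : Fin n) (hp1 : p.1 + 1 < n), π p < π L →
        π p < π ⟨p.1 + 1, hp1⟩ := by
      intro p hp1 hsmall
      by_cases hq : p.1 + 1 = n - 1
      · have : (⟨p.1 + 1, hp1⟩ : Fin n) = L := Fin.ext hq
        rw [this]; exact hsmall
      · by_contra hcon
        push_neg at hcon
        have hne : π ⟨p.1 + 1, hp1⟩ ≠ π p := by
          intro he
          have := π.injective he
          simp [Fin.ext_iff] at this
        have hdesc : π ⟨p.1 + 1, hp1⟩ < π p := lt_of_le_of_ne hcon hne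
        exact h2 ⟨p, L, hp1, by simp only [hL]; omega, hdesc, hsmall⟩
    -- Lemma B: every small position is a left-to-right minimum
    have hB : ∀ p : Fin n, π p < π L → ∀ i : Fin n, i < p → ¬ (π i < π p) := by
      intro p hsmall i hip hcon
      have hpn : p.1 < n - 1 := hsm p hsmall
      have hp1 : p.1 + 1 < n := by omega
      exact h1 ⟨i, p, hp1, hip, hcon, hA p hp1 hsmall⟩
    -- Lemma C: no two adjacent small positions
    have hC : ∀ (p : Fin n) (hp1 : p.1 + 1 < n), π p < π L →
        ¬ (π ⟨p.1 + 1, hp1⟩ < π L) := by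
      intro p hp1 hp hq
      exact hB ⟨p.1 + 1, hp1⟩ hq p (by simp [Fin.lt_def]) (hA p hp1 hp)
    -- counting
    set S := Finset.univ.filter (fun p : Fin n => π p < π L) with hS
    have hmem : ∀ p : Fin n, p ∈ S ↔ π p < π L := by
      intro p; simp [hS]
    have hcard : S.card = (π L).1 := by
      rw [← Fin.card_Iio (π L)]
      apply Finset.card_nbij (i := fun p => π p)
      · intro p hp
        simpa using (hmem p).1 hp
      · intro p _ q _ h
        exact π.injective h
      · intro v hv
        simp only [Finset.coe_Iio, Set.mem_Iio] at hv
        exact ⟨π.symm v, by simp [hmem, hv], by simp⟩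
    have hbound : S.card ≤ (Finset.range (n / 2)).card := by
      apply Finset.card_le_card_of_injOn (fun p => p.1 / 2)
      · intro p hp
        have := hsm p ((hmem p).1 hp)
        simp only [Finset.coe_range, Set.mem_Iio, Finset.mem_range, Finset.mem_coe]
        omega
      · intro p hp q hq he
        by_contra hne
        have hp' := (hmem p).1 hp
        have hq' := (hmem q).1 hq
        have hpn := hsm p hp'
        have hqn := hsm q hq'
        have hne' : p.1 ≠ q.1 := fun h => hne (Fin.ext h)
        simp only at he
        have : q.1 = p.1 + 1 ∨ p.1 = q.1 + 1 := by omega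
        rcases this with h | h
        · have he2 : (⟨p.1 + 1, by omega⟩ : Fin n) = q := Fin.ext h.symm
          exact hC p (by omega) hp' (by rw [he2]; exact hq')
        · have he2 : (⟨q.1 + 1, by omega⟩ : Fin n) = p := Fin.ext h.symm
          exact hC q (by omega) hq' (by rw [he2]; exact hp')
    rw [Finset.card_range] at hbound
    omega
  unfold a
  exact @Nat.card_of_isEmpty _ hE
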